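/- Let g : (0,∞) → (0,∞) be differentiable with lim_{x→∞} g'(x)x/g(x) = 1−λ for some λ > 0. Then for every μ < λ, g(x) = O(x^{1−μ}) as x → ∞, i.e. there exist constants C > 0 and M > 0 such that g(x) ≤ C x^{1−μ} for all x > M. -/

import Mathlib

theorem g_bigO_of_deriv_limit (g g' : ℝ → ℝ) (lam : ℝ) (hlam : 0 < lam)
    (hg : ∀ x > (0:ℝ), 0 < g x)
    (hderiv : ∀ x > (0:ℝ), HasDerivAt g (g' x) x)
    (hlim : Filter.Tendsto (fun x => g' x * x / g x) Filter.atTop (nhds (1 - lam))) :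
    ∀ μ' < lam, ∃ C > (0:ℝ), ∃ M > (0:ℝ), ∀ x > M, g x ≤ C * x ^ (1 - μ') := by
  intro μ' hμ'
  have h1 : (1:ℝ) - lam < 1 - μ' := by linarith
  have hev : ∀ᶠ x in Filter.atTop, g' x * x / g x < 1 - μ' :=
    hlim.eventually (gt_mem_nhds h1)
  obtain ⟨M0, hM0⟩ := Filter.eventually_atTop.mp hev
  set M := max M0 1 with hMdef
  have hMpos : (0:ℝ) < M := lt_of_lt_of_le one_pos (le_max_right _ _)
  set F : ℝ → ℝ := fun x => Real.log (g x) - (1 - μ') * Real.log x with hF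
  have hFd : ∀ x ∈ Set.Ici M, HasDerivAt F (g' x / g x - (1 - μ') / x) x := by
    intro x hx
    have hx0 : 0 < x := lt_of_lt_of_le hMpos hx
    have hgx := hg x hx0
    have h1 := (hderiv x hx0).log (ne_of_gt hgx)
    have h2 := (Real.hasDerivAt_log (ne_of_gt hx0)).const_mul (1 - μ')
    exact (h1.sub h2).congr_deriv (by ring)
  have hanti : AntitoneOn F (Set.Ici M) := by
    apply antitoneOn_of_deriv_nonpos (convex_Ici M)
    · exact fun x hx => (hFd x hx).continuousAt.continuousWithinAt
    · rw [interior_Ici]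
      exact fun x hx => (hFd x (Set.mem_Ici.mpr (le_of_lt hx))).differentiableAt.differentiableWithinAt
    · intro x hx
      rw [interior_Ici] at hx
      have hx' : M ≤ x := le_of_lt hx
      rw [(hFd x hx').deriv]
      have hx0 : 0 < x := lt_of_lt_of_le hMpos hx'
      have hgx := hg x hx0
      have hlt : g' x * x / g x < 1 - μ' := hM0 x (le_trans (le_max_left _ _) hx')
      rw [sub_nonpos, div_le_div_iff₀ hgx hx0]
      have := (div_lt_iff₀ hgx).mp hlt
      nlinarith
  have hgM := hg M hMpos
  have hCpos : 0 < g M / M ^ (1 - μ') := div_pos hgM (Real.rpow_pos_of_pos hMpos _)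
  refine ⟨g M / M ^ (1 - μ'), hCpos, M, hMpos, ?_⟩
  intro x hx
  have hx0 : 0 < x := hMpos.trans hx
  have hgx := hg x hx0
  have hFle : F x ≤ F M := hanti Set.self_mem_Ici (Set.mem_Ici.mpr hx.le) hx.le
  have hlog : Real.log (g x) ≤ Real.log (g M / M ^ (1 - μ') * x ^ (1 - μ')) := by
    rw [Real.log_mul (ne_of_gt hCpos) (ne_of_gt (Real.rpow_pos_of_pos hx0 _)),
      Real.log_div (ne_of_gt hgM) (ne_of_gt (Real.rpow_pos_of_pos hMpos _)),
      Real.log_rpow hMpos, Real.log_rpow hx0]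
    have : Real.log (g x) - (1 - μ') * Real.log x ≤
        Real.log (g M) - (1 - μ') * Real.log M := hFle
    linarith
  calc g x = Real.exp (Real.log (g x)) := (Real.exp_log hgx).symm
    _ ≤ Real.exp (Real.log (g M / M ^ (1 - μ') * x ^ (1 - μ'))) := Real.exp_le_exp.mpr hlog
    _ = g M / M ^ (1 - μ') * x ^ (1 - μ') :=
        Real.exp_log (mul_pos hCpos (Real.rpow_pos_of_pos hx0 _))
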